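/- Let a, ρ, γ₁ be real numbers with 0 < ρ < a and γ₁ > 0, and suppose γ₂ = ((a³+ρ³)/(a³−ρ³))·γ₁ (the compatibility condition). Let 𝒯 be the 2×2 real matrix with entries 𝒯₁₁ = −γ₁/(4π(a−ρ)²) + γ₂/(4πa²), 𝒯₁₂ = γ₁/(4π(a−ρ)²) + γ₂/(4πρ²), 𝒯₂₁ = −γ₁/(4πa²) + γ₂/(4π(a+ρ)²), 𝒯₂₂ = γ₂/(4π(a+ρ)²) + γ₁/(4πρ²). Then det 𝒯 = −(γ₁²/(16π²)) · 6(a⁴ − a²ρ² + ρ⁴) / ((a+ρ)(a−ρ)³(a²+aρ+ρ²)²); in particular det 𝒯 < 0, so 𝒯 is invertible. -/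
import Mathlib


open Real Matrix

/-- Under the compatibility condition, the determinant of the matrix `𝒯` of the
linearized operator equals the stated expression; in particular it is negative,
so `𝒯` is invertible. -/
theorem det_T_neg
    (a ρ γ₁ γ₂ : ℝ) (hρ : 0 < ρ) (hρa : ρ < a) (hγ₁ : 0 < γ₁)
    (hcompat : γ₂ = ((a ^ 3 + ρ ^ 3) / (a ^ 3 - ρ ^ 3)) * γ₁)
    (𝒯 : Matrix (Fin 2) (Fin 2) ℝ)
    (h𝒯 : 𝒯 = !![-γ₁ / (4 * π * (a - ρ) ^ 2) + γ₂ / (4 * π * a ^ 2),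
                   γ₁ / (4 * π * (a - ρ) ^ 2) + γ₂ / (4 * π * ρ ^ 2);
                  -γ₁ / (4 * π * a ^ 2) + γ₂ / (4 * π * (a + ρ) ^ 2),
                   γ₂ / (4 * π * (a + ρ) ^ 2) + γ₁ / (4 * π * ρ ^ 2)]) :
    𝒯.det = -(γ₁ ^ 2 / (16 * π ^ 2)) *
        (6 * (a ^ 4 - a ^ 2 * ρ ^ 2 + ρ ^ 4)) /
        ((a + ρ) * (a - ρ) ^ 3 * (a ^ 2 + a * ρ + ρ ^ 2) ^ 2) ∧
      𝒯.det < 0 ∧ IsUnit 𝒯 := by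
  have hπ : (π : ℝ) ≠ 0 := Real.pi_ne_zero
  have ha : 0 < a := hρ.trans hρa
  have hamρ : 0 < a - ρ := sub_pos.mpr hρa
  have hapρ : 0 < a + ρ := by linarith
  have hcube : 0 < a ^ 3 - ρ ^ 3 := by nlinarith [sq_nonneg (a + ρ), sq_nonneg a, sq_nonneg ρ, mul_pos hρ ha]
  have hsq : 0 < a ^ 2 + a * ρ + ρ ^ 2 := by nlinarith
  have hquart : 0 < a ^ 4 - a ^ 2 * ρ ^ 2 + ρ ^ 4 := by nlinarith [sq_nonneg (a^2 - ρ^2), sq_nonneg (a*ρ)]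
  have hdet : 𝒯.det = -(γ₁ ^ 2 / (16 * π ^ 2)) *
        (6 * (a ^ 4 - a ^ 2 * ρ ^ 2 + ρ ^ 4)) /
        ((a + ρ) * (a - ρ) ^ 3 * (a ^ 2 + a * ρ + ρ ^ 2) ^ 2) := by
    subst hcompat h𝒯
    rw [Matrix.det_fin_two_of]
    have h1 : a ^ 3 - ρ ^ 3 = (a - ρ) * (a ^ 2 + a * ρ + ρ ^ 2) := by ring
    field_simp
    ring
  have hneg : 𝒯.det < 0 := by
    rw [hdet]
    apply div_neg_of_neg_of_pos
    · apply mul_neg_of_neg_of_pos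
      · simp only [neg_lt, neg_zero]
        positivity
      · positivity
    · positivity
  exact ⟨hdet, hneg, (Matrix.isUnit_iff_isUnit_det 𝒯).mpr (isUnit_iff_ne_zero.mpr hneg.ne)⟩
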